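/- Let α ∈ (0,1), d = dist(E,P) > 0, and y̲ = (y_E - α²y_P - αd)/(1-α²). If y_E > 0 and y̲ > 0 then for every point (x,y) with dist((x,y),E) = α·dist((x,y),P) we have y > 0; i.e., if the lowest point of the Apollonius circle is above the x-axis, the entire Apollonius circle lies strictly above the x-axis. -/
import Mathlib


/-- If the lowest point of the Apollonius circle is strictly above the border
(the `x`-axis), then the entire Apollonius circle lies strictly above it. -/
theorem circle_above_border (xP yP xE yE α : ℝ)
    (hα0 : 0 < α) (hα1 : α < 1)
    (d : ℝ) (hd : d = Real.sqrt ((xE - xP)^2 + (yE - yP)^2)) (hdpos : 0 < d)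
    (hyE : 0 < yE)
    (hylow : 0 < (yE - α^2 * yP - α * d) / (1 - α^2)) :
    ∀ x y : ℝ,
      Real.sqrt ((x - xE)^2 + (y - yE)^2)
        = α * Real.sqrt ((x - xP)^2 + (y - yP)^2) →
      0 < y := by
  intro x y h
  have hs : 0 < 1 - α ^ 2 := by nlinarith
  have ha : (0:ℝ) ≤ (x - xE)^2 + (y - yE)^2 := by positivity
  have hb : (0:ℝ) ≤ (x - xP)^2 + (y - yP)^2 := by positivity
  have h1 : (x - xE)^2 + (y - yE)^2 = α^2 * ((x - xP)^2 + (y - yP)^2) := by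
    have := congrArg (· ^ 2) h
    simpa [mul_pow, Real.sq_sqrt ha, Real.sq_sqrt hb] using this
  have hd2 : d^2 = (xE - xP)^2 + (yE - yP)^2 := by
    rw [hd]; exact Real.sq_sqrt (by positivity)
  have hlow : 0 < yE - α^2 * yP - α * d := by
    rcases div_pos_iff.mp hylow with ⟨h1', _⟩ | ⟨_, h2'⟩
    · linarith
    · linarith
  have key : ((1 - α^2) * y - (yE - α^2 * yP))^2 ≤ (α * d)^2 := by
    nlinarith [sq_nonneg ((1 - α^2) * x - (xE - α^2 * xP)), h1, hd2]
  have had : 0 ≤ α * d := by positivity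
  have hyd : (yE - α^2 * yP) - α * d ≤ (1 - α^2) * y := by
    nlinarith [key, had]
  nlinarith [hyd, hlow, hs]
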